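/- Let m ∈ ℕ, m ≥ 1, (m-1)/m < λ ≤ m/(m+1), and let k ∈ {-1, -2, ..., -m}. If z = (x₀, y₀) with k/λ ≤ x₀ < (k+1)/λ and y₀ ≥ 0, then the set of limit points of the orbit {Aⁿ(z)} is exactly {(k, 0), (0, k)}; in fact the orbit is eventually the 2-cycle (k,0) ↦ (0,k) ↦ (k,0). -/

import Mathlib

noncomputable def A (l : ℝ) : ℝ × ℝ → ℝ × ℝ := fun p => ((⌊l * p.2⌋ : ℤ), (⌊l * p.1⌋ : ℤ))

noncomputable def gseq (l : ℝ) (j : ℤ) : ℕ → ℤ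
  | 0 => j
  | n + 1 => ⌊l * gseq l j n⌋

lemma gseq_zero_of_le (l : ℝ) (hl0 : 0 < l) (hl1 : l < 1) (j : ℤ) (hj : 0 ≤ j)
    {n : ℕ} (hn : j.toNat ≤ n) : gseq l j n = 0 := by
  have main : ∀ n : ℕ, gseq l j n = 0 ∨ (1 ≤ gseq l j n ∧ gseq l j n + n ≤ j) := by
    intro n
    induction n with
    | zero =>
      rcases eq_or_lt_of_le hj with h | h
      · exact Or.inl h.symm
      · exact Or.inr ⟨h, by simp [gseq]⟩
    | succ n ih =>
      rcases ih with h | ⟨h1, h2⟩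
      · left; simp [gseq, h]
      · have hcast : (1:ℝ) ≤ (gseq l j n : ℝ) := by exact_mod_cast h1
        have hle : gseq l j (n+1) ≤ gseq l j n - 1 := by
          have hf : (gseq l j (n+1) : ℝ) ≤ l * gseq l j n := by
            simpa [gseq] using Int.floor_le (l * (gseq l j n : ℝ))
          have hlt : (gseq l j (n+1) : ℝ) < gseq l j n :=
            lt_of_le_of_lt hf (by nlinarith)
          have : gseq l j (n+1) < gseq l j n := by exact_mod_cast hlt
          omega
        have hge : 0 ≤ gseq l j (n+1) := by
          show 0 ≤ ⌊l * (gseq l j n : ℝ)⌋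
          apply Int.floor_nonneg.mpr
          nlinarith
        rcases eq_or_lt_of_le hge with h | h
        · exact Or.inl h.symm
        · right
          refine ⟨h, ?_⟩
          push_cast
          push_cast at h2
          linarith
  rcases main n with h | ⟨h1, h2⟩
  · exact h
  · exfalso
    have : (n : ℤ) ≥ j := by omega
    omega

theorem stmt11 (m : ℕ) (hm : 1 ≤ m) (l : ℝ)
    (h1 : ((m : ℝ) - 1) / m < l) (h2 : l ≤ (m : ℝ) / (m + 1))
    (k : ℤ) (hk1 : -(m : ℤ) ≤ k) (hk2 : k ≤ -1)
    (x y : ℝ) (hx1 : (k : ℝ) / l ≤ x) (hx2 : x < ((k : ℝ) + 1) / l) (hy : 0 ≤ y) :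
    {p : ℝ × ℝ | MapClusterPt p Filter.atTop (fun n => (A l)^[n] (x, y))}
      = {((k : ℝ), (0 : ℝ)), ((0 : ℝ), (k : ℝ))} ∧
    ∃ N : ℕ, (∀ n ≥ N, (A l)^[n + 2] (x, y) = (A l)^[n] (x, y)) ∧
      ({(A l)^[N] (x, y), (A l)^[N + 1] (x, y)} : Set (ℝ × ℝ))
        = {((k : ℝ), (0 : ℝ)), ((0 : ℝ), (k : ℝ))} := by
  have hm' : (0:ℝ) < m := by exact_mod_cast hm
  have hl0 : 0 < l := by
    have : (0:ℝ) ≤ ((m:ℝ) - 1) / m := by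
      apply div_nonneg _ hm'.le
      have : (1:ℝ) ≤ m := by exact_mod_cast hm
      linarith
    linarith
  have hl1 : l < 1 := by
    have : (m:ℝ) / (m + 1) < 1 := by
      rw [div_lt_one (by linarith)]
      linarith
    linarith
  have hml : (m:ℝ) - 1 < l * m := by
    have := (div_lt_iff₀ hm').mp h1
    linarith
  have hkr1 : (k:ℝ) ≤ -1 := by exact_mod_cast hk2
  have hkr2 : -(m:ℝ) ≤ k := by exact_mod_cast hk1
  -- floor of l * k is k
  have hfk : ⌊l * (k:ℝ)⌋ = k := by
    rw [Int.floor_eq_iff]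
    constructor
    · nlinarith
    · push_cast
      nlinarith
  -- floor of l * x is k
  have hfx : ⌊l * x⌋ = k := by
    rw [Int.floor_eq_iff]
    constructor
    · calc (k:ℝ) = l * ((k:ℝ)/l) := by field_simp
        _ ≤ l * x := mul_le_mul_of_nonneg_left hx1 hl0.le
    · push_cast
      calc l * x < l * (((k:ℝ)+1)/l) := by
            exact mul_lt_mul_of_pos_left hx2 hl0
        _ = (k:ℝ) + 1 := by field_simp
  set j : ℤ := ⌊l * y⌋ with hj
  have hj0 : 0 ≤ j := Int.floor_nonneg.mpr (by positivity)
  -- key orbit formula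
  have key : ∀ n : ℕ, (A l)^[n+1] (x, y) =
      if n % 2 = 0 then (((gseq l j n : ℤ) : ℝ), (k:ℝ)) else ((k:ℝ), ((gseq l j n : ℤ) : ℝ)) := by
    intro n
    induction n with
    | zero =>
      simp [A, gseq, hfx, hj]
    | succ n ih =>
      rw [Function.iterate_succ_apply', ih]
      rcases Nat.even_or_odd n with he | ho
      · have h0 : n % 2 = 0 := Nat.even_iff.mp he
        rw [if_pos h0, if_neg (by omega)]
        simp only [A]
        have hg : ⌊l * ((gseq l j n : ℤ) : ℝ)⌋ = gseq l j (n+1) := rfl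
        simp [hfk, hg]
      · have h0 : n % 2 = 1 := Nat.odd_iff.mp ho
        rw [if_neg (by omega), if_pos (by omega)]
        simp only [A]
        have hg : ⌊l * ((gseq l j n : ℤ) : ℝ)⌋ = gseq l j (n+1) := rfl
        simp [hfk, hg]
  have hgz : ∀ {n : ℕ}, j.toNat ≤ n → gseq l j n = 0 := fun hn =>
    gseq_zero_of_le l hl0 hl1 j hj0 hn
  set N : ℕ := 2 * j.toNat + 1 with hN
  -- value of orbit for n ≥ N
  have horb : ∀ n ≥ N, (A l)^[n] (x, y) =
      if n % 2 = 0 then ((k:ℝ), (0:ℝ)) else ((0:ℝ), (k:ℝ)) := by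
    intro n hn
    obtain ⟨p, rfl⟩ : ∃ p, n = p + 1 := ⟨n - 1, by omega⟩
    have hp : j.toNat ≤ p := by omega
    rw [key p, hgz hp]
    rcases Nat.even_or_odd p with he | ho
    · have h0 : p % 2 = 0 := Nat.even_iff.mp he
      rw [if_pos h0, if_neg (by omega)]
      norm_num
    · have h0 : p % 2 = 1 := Nat.odd_iff.mp ho
      rw [if_neg (by omega), if_pos (by omega)]
      norm_num
  have hNval : (A l)^[N] (x, y) = ((0:ℝ), (k:ℝ)) := by
    rw [horb N le_rfl, if_neg (by omega)]
  have hN1val : (A l)^[N+1] (x, y) = ((k:ℝ), (0:ℝ)) := by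
    rw [horb (N+1) (by omega), if_pos (by omega)]
  have hmem : ∀ᶠ n in Filter.atTop, (A l)^[n] (x, y) ∈
      ({((k:ℝ), (0:ℝ)), ((0:ℝ), (k:ℝ))} : Set (ℝ × ℝ)) := by
    filter_upwards [Filter.eventually_ge_atTop N] with n hn
    rw [horb n hn]
    split <;> simp
  refine ⟨?_, N, ?_, ?_⟩
  · ext p
    simp only [Set.mem_setOf_eq, Set.mem_insert_iff, Set.mem_singleton_iff]
    constructor
    · intro h
      by_contra hp
      push_neg at hp
      have hop : IsOpen (({((k:ℝ), (0:ℝ)), ((0:ℝ), (k:ℝ))} : Set (ℝ × ℝ))ᶜ) :=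
        (Set.toFinite _).isClosed.isOpen_compl
      have hs : (({((k:ℝ), (0:ℝ)), ((0:ℝ), (k:ℝ))} : Set (ℝ × ℝ))ᶜ) ∈ nhds p := by
        apply hop.mem_nhds
        simp only [Set.mem_compl_iff, Set.mem_insert_iff, Set.mem_singleton_iff]
        tauto
      have hfreq := (mapClusterPt_iff_frequently.mp h) _ hs
      obtain ⟨n, hn1, hn2⟩ := (hfreq.and_eventually hmem).exists
      exact hn1 hn2
    · intro hp
      rw [mapClusterPt_iff_frequently]
      intro s hs
      rw [Filter.frequently_atTop]
      intro a
      rcases hp with rfl | rfl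
      · refine ⟨2 * (a + j.toNat) + 2, by omega, ?_⟩
        rw [horb _ (by omega), if_pos (by omega)]
        exact mem_of_mem_nhds hs
      · refine ⟨2 * (a + j.toNat) + 1, by omega, ?_⟩
        rw [horb _ (by omega), if_neg (by omega)]
        exact mem_of_mem_nhds hs
  · intro n hn
    rw [horb (n+2) (by omega), horb n hn]
    rcases Nat.even_or_odd n with he | ho
    · have h0 : n % 2 = 0 := Nat.even_iff.mp he
      rw [if_pos h0, if_pos (by omega)]
    · have h0 : n % 2 = 1 := Nat.odd_iff.mp ho
      rw [if_neg (by omega), if_neg (by omega)]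
  · rw [hNval, hN1val]
    exact Set.pair_comm _ _
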